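/- Fix ρ ∈ (0, 4/5), α₀ < ρ/2, and an open set U₀ ⊆ ℂ containing the closed ball B̄(E_at, ρ). Let E⁽⁰⁾ : U₀ → ℂ be analytic with |E⁽⁰⁾(z) − (E_at − z)| ≤ α₀ for all z ∈ U₀. Then for every w with |w| < ρ/2 + ε (ε > 0 small enough that α₀ + ρ/2 + ε < ρ), the function z ↦ E⁽⁰⁾(z) − w has exactly one zero in B(E_at, ρ); consequently E⁽⁰⁾ restricts to a conformal bijection from U₁ := {z ∈ U₀ : |E⁽⁰⁾(z)| ≤ ρ/2} onto the closed disc D_{ρ/2}, and U₁ ⊂ B(E_at, ρ). -/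

import Mathlib

open Metric


open Set Filter Complex

open scoped Topology

/-- Derivative computation for the perturbation `g z = E0 z - (Eat - z)`. -/
lemma rcs_deriv_g_eq {E0 : ℂ → ℂ} {Eat z : ℂ} (h : DifferentiableAt ℂ E0 z) :
    deriv (fun w => E0 w - (Eat - w)) z = deriv E0 z + 1 := by
  have h2 : HasDerivAt (fun w : ℂ => Eat - w) (-1) z := (hasDerivAt_id z).const_sub Eat
  have := (h.hasDerivAt.sub h2).deriv
  rw [show (fun w => E0 w - (Eat - w)) = (E0 - fun w => Eat - w) from rfl, this]; ring

/-- Cauchy estimate: the derivative of the perturbation is small near the center. -/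
lemma rcs_deriv_bound {U₀ : Set ℂ} (hU₀ : IsOpen U₀) {Eat : ℂ} {ρ α₀ : ℝ}
    (hα0 : 0 ≤ α₀) (hα : α₀ < ρ) (hball : closedBall Eat ρ ⊆ U₀)
    {E0 : ℂ → ℂ} (hE0 : AnalyticOnNhd ℂ E0 U₀)
    (hbound : ∀ z ∈ U₀, ‖E0 z - (Eat - z)‖ ≤ α₀)
    {z : ℂ} (hz : z ∈ closedBall Eat α₀) :
    ‖deriv (fun w => E0 w - (Eat - w)) z‖ ≤ α₀ / (ρ - α₀) := by
  set g := fun w => E0 w - (Eat - w) with hg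
  have hgdiff : DifferentiableOn ℂ g U₀ :=
    hE0.differentiableOn.sub ((differentiable_const Eat).sub differentiable_id).differentiableOn
  have hsub : closedBall z (ρ - α₀) ⊆ U₀ := by
    intro x hx
    apply hball
    have h1 : dist x Eat ≤ dist x z + dist z Eat := dist_triangle _ _ _
    have h2 : dist x z ≤ ρ - α₀ := mem_closedBall.1 hx
    have h3 : dist z Eat ≤ α₀ := mem_closedBall.1 hz
    exact mem_closedBall.2 (by linarith)
  have hr : (0:ℝ) < ρ - α₀ := by linarith
  have hcd := Complex.norm_cderiv_le hr
    (fun x hx => hbound x (hsub (sphere_subset_closedBall hx)))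
  rwa [Complex.cderiv_eq_deriv hU₀ hgdiff hr hsub] at hcd

/-- `E0` is nowhere locally constant on the ball. -/
lemma rcs_not_loc_const {U₀ : Set ℂ} {Eat : ℂ} {ρ α₀ : ℝ}
    (hρ₀ : 0 < ρ) (hα0 : 0 ≤ α₀) (h2α : 2 * α₀ < ρ) (hball : closedBall Eat ρ ⊆ U₀)
    {E0 : ℂ → ℂ} (hE0 : AnalyticOnNhd ℂ E0 U₀)
    (hbound : ∀ z ∈ U₀, ‖E0 z - (Eat - z)‖ ≤ α₀)
    {z : ℂ} (hz : z ∈ ball Eat ρ) :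
    ¬ ∀ᶠ z' in 𝓝 z, E0 z' = E0 z := by
  intro h
  have hsub : ball Eat ρ ⊆ U₀ := ball_subset_closedBall.trans hball
  have hcon : Set.EqOn E0 (fun _ => E0 z) (ball Eat ρ) :=
    (hE0.mono hsub).eqOn_of_preconnected_of_eventuallyEq analyticOnNhd_const
      (convex_ball Eat ρ).isPreconnected hz h
  set c := E0 z with hc
  set s : ℝ := (2 * α₀ + ρ) / 2 with hs
  have hs1 : 2 * α₀ < s := by rw [hs]; linarith
  have hs2 : s < ρ := by rw [hs]; linarith
  have hs0 : 0 ≤ s := by rw [hs]; linarith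
  have hz₁ : Eat ∈ ball Eat ρ := mem_ball_self hρ₀
  have hz₂ : Eat + (s:ℂ) ∈ ball Eat ρ := by
    rw [mem_ball]
    simp only [dist_eq_norm, add_sub_cancel_left]
    rw [Complex.norm_real, Real.norm_eq_abs, _root_.abs_of_nonneg hs0]
    exact hs2
  have h1 : ‖c‖ ≤ α₀ := by
    have h := hbound Eat (hsub hz₁)
    have hE : E0 Eat = c := hcon hz₁
    rw [hE] at h
    simpa using h
  have h2 : ‖c + (s:ℂ)‖ ≤ α₀ := by
    have h := hbound (Eat + (s:ℂ)) (hsub hz₂)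
    have hE : E0 (Eat + (s:ℂ)) = c := hcon hz₂
    rw [hE] at h
    have heq : c - (Eat - (Eat + (s:ℂ))) = c + (s:ℂ) := by ring
    rwa [heq] at h
  have h3 : ‖(s:ℂ)‖ ≤ 2 * α₀ := by
    have : (s:ℂ) = (c + s) - c := by ring
    rw [this]
    calc ‖(c + (s:ℂ)) - c‖ ≤ ‖c + (s:ℂ)‖ + ‖c‖ := norm_sub_le _ _
    _ ≤ 2 * α₀ := by linarith
  rw [Complex.norm_real, Real.norm_eq_abs, _root_.abs_of_nonneg hs0] at h3
  linarith

/-- Open-mapping helper: images of neighborhoods are neighborhoods. -/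
lemma rcs_image_nhds {f : ℂ → ℂ} {z : ℂ} (hmap : 𝓝 (f z) ≤ Filter.map f (𝓝 z))
    {N : Set ℂ} (hN : N ∈ 𝓝 z) : f '' N ∈ 𝓝 (f z) :=
  hmap (Filter.mem_map.2 (Filter.mem_of_superset hN (Set.subset_preimage_image f N)))

/-- Local injectivity at a point with nonvanishing derivative. -/
lemma rcs_loc_inj {U₀ : Set ℂ} (hU₀ : IsOpen U₀) {E0 : ℂ → ℂ}
    (hE0 : AnalyticOnNhd ℂ E0 U₀) {z₀ : ℂ} (hz₀ : z₀ ∈ U₀) (hd : deriv E0 z₀ ≠ 0) :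
    ∃ t > 0, ball z₀ t ⊆ U₀ ∧ Set.InjOn E0 (ball z₀ t) := by
  set c := deriv E0 z₀ with hc
  have hcpos : 0 < ‖c‖ := norm_pos_iff.2 hd
  have hcont : ContinuousAt (deriv E0) z₀ := ((hE0.deriv) z₀ hz₀).continuousAt
  have hev : ∀ᶠ x in 𝓝 z₀, dist (deriv E0 x) c < ‖c‖ / 2 := by
    have : ball c (‖c‖ / 2) ∈ 𝓝 c := ball_mem_nhds c (by linarith)
    exact hcont this
  have hev2 : ∀ᶠ x in 𝓝 z₀, x ∈ U₀ ∧ dist (deriv E0 x) c < ‖c‖ / 2 :=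
    (hU₀.eventually_mem hz₀).and hev
  obtain ⟨t, ht0, ht⟩ := Metric.eventually_nhds_iff_ball.1 hev2
  refine ⟨t, ht0, fun x hx => (ht x hx).1, ?_⟩
  intro z1 h1 z2 h2 he
  by_contra hne
  have hdiff : ∀ x ∈ ball z₀ t, DifferentiableAt ℂ (fun w => E0 w - c * w) x := fun x hx =>
    (hE0 x (ht x hx).1).differentiableAt.sub (differentiableAt_id.const_mul c)
  have hder : ∀ x ∈ ball z₀ t, ‖deriv (fun w => E0 w - c * w) x‖ ≤ ‖c‖ / 2 := by
    intro x hx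
    have hder2 : HasDerivAt (fun w => c * w) c x := by
      simpa using (hasDerivAt_id x).const_mul c
    have := ((hE0 x (ht x hx).1).differentiableAt.hasDerivAt.sub hder2).deriv
    rw [show (fun w => E0 w - c * w) = (E0 - fun w => c * w) from rfl, this]
    have h := (ht x hx).2
    rw [dist_eq_norm] at h
    exact h.le
  have hlip := Convex.norm_image_sub_le_of_norm_deriv_le hdiff hder (convex_ball z₀ t) h1 h2
  have hval : (E0 z2 - c * z2) - (E0 z1 - c * z1) = c * (z1 - z2) := by rw [he]; ring
  rw [hval] at hlip
  rw [norm_mul] at hlip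
  have h12 : 0 < ‖z1 - z2‖ := norm_pos_iff.2 (sub_ne_zero.2 hne)
  have : ‖z2 - z1‖ = ‖z1 - z2‖ := norm_sub_rev _ _
  rw [this] at hlip
  nlinarith

/-- Unique zero with nonvanishing derivative, for the value `w = 0`. -/
lemma rcs_Q_zero {U₀ : Set ℂ} (hU₀ : IsOpen U₀) {Eat : ℂ} {ρ α₀ : ℝ}
    (hρ₀ : 0 < ρ) (hα0 : 0 ≤ α₀) (hα₀ρ : α₀ < ρ / 2) (hball : closedBall Eat ρ ⊆ U₀)
    {E0 : ℂ → ℂ} (hE0 : AnalyticOnNhd ℂ E0 U₀)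
    (hbound : ∀ z ∈ U₀, ‖E0 z - (Eat - z)‖ ≤ α₀) :
    ∃ z, (z ∈ ball Eat ρ ∧ E0 z = 0) ∧ deriv E0 z ≠ 0 ∧
      ∀ z', z' ∈ ball Eat ρ → E0 z' = 0 → z' = z := by
  have h2α : 2 * α₀ < ρ := by linarith
  have hsub : ball Eat ρ ⊆ U₀ := ball_subset_closedBall.trans hball
  -- some facts about solutions
  have hloc : ∀ z ∈ ball Eat ρ, E0 z = 0 → z ∈ closedBall Eat α₀ := by
    intro z hz hze
    have h := hbound z (hsub hz)
    rw [hze, zero_sub, norm_neg] at h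
    rw [mem_closedBall, dist_comm, dist_eq_norm]
    exact h
  set C := α₀ / (ρ - α₀) with hC
  have hρα : (0:ℝ) < ρ - α₀ := by linarith
  have hC1 : C < 1 := by
    rw [hC, div_lt_one hρα]; linarith
  have hC0 : 0 ≤ C := div_nonneg hα0 hρα.le
  -- Lipschitz estimate on the small ball
  have hlip : ∀ z1 ∈ closedBall Eat α₀, ∀ z2 ∈ closedBall Eat α₀,
      ‖(E0 z2 - (Eat - z2)) - (E0 z1 - (Eat - z1))‖ ≤ C * ‖z2 - z1‖ := by
    intro z1 h1 z2 h2
    have hdiff : ∀ x ∈ closedBall Eat α₀, DifferentiableAt ℂ (fun w => E0 w - (Eat - w)) x := by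
      intro x hx
      have hxU : x ∈ U₀ := hball (closedBall_subset_closedBall (by linarith) hx)
      exact (hE0 x hxU).differentiableAt.sub
        ((differentiableAt_const Eat).sub differentiableAt_id)
    have hder : ∀ x ∈ closedBall Eat α₀, ‖deriv (fun w => E0 w - (Eat - w)) x‖ ≤ C :=
      fun x hx => rcs_deriv_bound hU₀ hα0 (by linarith) hball hE0 hbound hx
    exact Convex.norm_image_sub_le_of_norm_deriv_le hdiff hder (convex_closedBall Eat α₀) h1 h2
  -- uniqueness of solutions
  have huniq : ∀ z1, z1 ∈ ball Eat ρ → E0 z1 = 0 → ∀ z2, z2 ∈ ball Eat ρ → E0 z2 = 0 →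
      z2 = z1 := by
    intro z1 h1 he1 z2 h2 he2
    have hc1 := hloc z1 h1 he1
    have hc2 := hloc z2 h2 he2
    have := hlip z1 hc1 z2 hc2
    rw [he1, he2] at this
    have heq : (0 - (Eat - z2)) - (0 - (Eat - z1)) = z2 - z1 := by ring
    rw [heq] at this
    by_contra hne
    have hpos : 0 < ‖z2 - z1‖ := norm_pos_iff.2 (sub_ne_zero.2 hne)
    nlinarith
  -- nonvanishing derivative at solutions
  have hder0 : ∀ z ∈ closedBall Eat α₀, deriv E0 z ≠ 0 := by
    intro z hz hd
    have hzU : z ∈ U₀ := hball (closedBall_subset_closedBall (by linarith) hz)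
    have hb := rcs_deriv_bound hU₀ hα0 (by linarith) hball hE0 hbound hz
    rw [rcs_deriv_g_eq (hE0 z hzU).differentiableAt, hd] at hb
    simp only [zero_add, norm_one] at hb
    linarith
  -- existence via the minimum modulus principle
  have hcont : ContinuousOn (fun z => ‖E0 z‖) (closedBall Eat ρ) :=
    (hE0.continuousOn.mono hball).norm
  have hcenter : ‖E0 Eat‖ ≤ α₀ := by
    have := hbound Eat (hball (mem_closedBall_self hρ₀.le))
    simpa using this
  have hsphere : ∀ z' ∈ sphere Eat ρ, ‖E0 Eat‖ < ‖E0 z'‖ := by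
    intro z' hz'
    have hzU : z' ∈ U₀ := hball (sphere_subset_closedBall hz')
    have hb := hbound z' hzU
    have hd : ‖Eat - z'‖ = ρ := by
      rw [← dist_eq_norm]
      rw [mem_sphere, dist_comm] at hz'
      exact hz'
    have htri : ‖Eat - z'‖ - ‖E0 z'‖ ≤ ‖E0 z' - (Eat - z')‖ := by
      calc ‖Eat - z'‖ - ‖E0 z'‖ ≤ ‖(Eat - z') - E0 z'‖ := norm_sub_norm_le _ _
      _ = ‖E0 z' - (Eat - z')‖ := norm_sub_rev _ _
    rw [hd] at htri
    linarith
  obtain ⟨z, hzball, hmin⟩ := Metric.exists_isLocalMin_mem_ball hcont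
    (mem_closedBall_self hρ₀.le) hsphere
  have h6 : ∀ᶠ w in 𝓝 z, DifferentiableAt ℂ E0 w := by
    filter_upwards [hU₀.eventually_mem (hsub hzball)] with x hx
    exact (hE0 x hx).differentiableAt
  have hmin' : IsLocalMin (norm ∘ E0) z := hmin
  rcases eventually_eq_or_eq_zero_of_isLocalMin_norm h6 hmin' with h | h
  · exact absurd h (rcs_not_loc_const hρ₀ hα0 h2α hball hE0 hbound hzball)
  · exact ⟨z, ⟨hzball, h⟩, hder0 z (hloc z hzball h),
      fun z' hz' he' => huniq z hzball h z' hz' he'⟩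

/-- Branch point case: near a critical value, every other nearby value is attained twice. -/
lemma rcs_branch {U₀ : Set ℂ} {E0 : ℂ → ℂ}
    (hE0 : AnalyticOnNhd ℂ E0 U₀) {z₀ : ℂ} {B : Set ℂ} (hB : IsOpen B) (hz₀B : z₀ ∈ B)
    (hBU : B ⊆ U₀) (w : ℂ) (hz₀e : E0 z₀ = w) (hd0 : deriv E0 z₀ = 0)
    (hnc : ¬ ∀ᶠ z' in 𝓝 z₀, E0 z' = E0 z₀) :
    ∃ δ > 0, ∀ w', dist w' w < δ → w' ≠ w →
      ∃ a b, a ∈ B ∧ b ∈ B ∧ a ≠ b ∧ E0 a = w' ∧ E0 b = w' := by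
  have hzU : z₀ ∈ U₀ := hBU hz₀B
  have hfa : AnalyticAt ℂ (fun z => E0 z - w) z₀ := (hE0 z₀ hzU).sub analyticAt_const
  have hne_top : analyticOrderAt (fun z => E0 z - w) z₀ ≠ ⊤ := by
    intro htop
    have h := analyticOrderAt_eq_top.1 htop
    apply hnc
    filter_upwards [h] with x hx
    rw [hz₀e]
    exact sub_eq_zero.1 hx
  set n := (analyticOrderAt (fun z => E0 z - w) z₀).toNat with hndef
  have hn : analyticOrderAt (fun z => E0 z - w) z₀ = n := (ENat.coe_toNat hne_top).symm
  obtain ⟨u, hu_an, hu0, hueq⟩ := (hfa.analyticOrderAt_eq_natCast (n := n)).mp hn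
  have hn0 : n ≠ 0 := by
    intro h
    have h0 := hueq.self_of_nhds
    rw [h, pow_zero, one_smul, hz₀e, sub_self] at h0
    exact hu0 h0.symm
  have hn1 : n ≠ 1 := by
    intro h
    have hD : deriv (fun z => E0 z - w) z₀ = 0 := by
      rw [deriv_sub_const, hd0]
    have hD2 : HasDerivAt (fun z => (z - z₀) ^ n • u z)
        (u z₀) z₀ := by
      rw [h]
      have h1 : HasDerivAt (fun z : ℂ => z - z₀) 1 z₀ := (hasDerivAt_id z₀).sub_const z₀
      have h2 : HasDerivAt u (deriv u z₀) z₀ := hu_an.differentiableAt.hasDerivAt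
      have := h1.mul h2
      simp only [pow_one, smul_eq_mul]
      exact (by simpa using this : HasDerivAt ((fun z : ℂ => z - z₀) * u) (u z₀) z₀)
    rw [Filter.EventuallyEq.deriv_eq hueq, hD2.deriv] at hD
    exact hu0 hD
  have hn2 : 2 ≤ n := by omega
  have hnC : (n:ℂ) ≠ 0 := Nat.cast_ne_zero.2 hn0
  -- n-th root of u
  set c := Complex.exp (Complex.log (u z₀) / n) with hcdef
  have hc_pow : c ^ n = u z₀ := by
    rw [hcdef, ← Complex.exp_nat_mul, mul_div_cancel₀ _ hnC, Complex.exp_log hu0]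
  have hc0 : c ≠ 0 := Complex.exp_ne_zero _
  set q := fun z => u z * (u z₀)⁻¹ with hqdef
  have hq_an : AnalyticAt ℂ q z₀ := hu_an.mul analyticAt_const
  have hq1 : q z₀ = 1 := mul_inv_cancel₀ hu0
  set v := fun z => c * Complex.exp ((n:ℂ)⁻¹ * Complex.log (q z)) with hvdef
  have hv_an : AnalyticAt ℂ v z₀ := by
    apply analyticAt_const.mul
    apply AnalyticAt.cexp
    apply analyticAt_const.mul
    apply hq_an.clog
    rw [hq1]
    exact Complex.one_mem_slitPlane
  have hv0 : v z₀ = c := by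
    rw [hvdef]
    simp only [hq1, Complex.log_one, mul_zero, Complex.exp_zero, mul_one]
  have hvpow : ∀ᶠ z in 𝓝 z₀, v z ^ n = u z := by
    have hu_ne : ∀ᶠ z in 𝓝 z₀, u z ≠ 0 := hu_an.continuousAt.eventually_ne hu0
    filter_upwards [hu_ne] with z hz
    have hqz : q z ≠ 0 := mul_ne_zero hz (inv_ne_zero hu0)
    rw [hvdef]
    simp only
    rw [mul_pow, hc_pow, ← Complex.exp_nat_mul, ← mul_assoc, mul_inv_cancel₀ hnC, one_mul,
      Complex.exp_log hqz, hqdef]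
    field_simp
  set ψ := fun z => (z - z₀) * v z with hψdef
  have hψ_an : AnalyticAt ℂ ψ z₀ := (analyticAt_id.sub analyticAt_const).mul hv_an
  have hψ0 : ψ z₀ = 0 := by simp [hψdef]
  have hψd : deriv ψ z₀ = c := by
    have h1 : HasDerivAt (fun z : ℂ => z - z₀) 1 z₀ := (hasDerivAt_id z₀).sub_const z₀
    have h2 : HasDerivAt v (deriv v z₀) z₀ := hv_an.differentiableAt.hasDerivAt
    have := (h1.mul h2).deriv
    rw [hψdef]
    rw [show (fun z => (z - z₀) * v z) = ((fun z => z - z₀) * v) from rfl, this, hv0]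
    ring
  have hψeq : ∀ᶠ z in 𝓝 z₀, E0 z - w = ψ z ^ n := by
    filter_upwards [hueq, hvpow] with z h1 h2
    show E0 z - w = ((z - z₀) * v z) ^ n
    rw [mul_pow, h2, h1, smul_eq_mul]
  have hψnc : ¬ ∀ᶠ z in 𝓝 z₀, ψ z = ψ z₀ := by
    intro h
    have : deriv ψ z₀ = 0 := by
      have := Filter.EventuallyEq.deriv_eq (h : ψ =ᶠ[𝓝 z₀] fun _ => ψ z₀)
      rw [this, deriv_const]
    rw [hψd] at this
    exact hc0 this
  have hmap : 𝓝 (ψ z₀) ≤ Filter.map ψ (𝓝 z₀) :=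
    hψ_an.eventually_constant_or_nhds_le_map_nhds_aux.resolve_left hψnc
  obtain ⟨t, ht0, ht⟩ := Metric.eventually_nhds_iff_ball.1 ((hB.eventually_mem hz₀B).and hψeq)
  have hT : ψ '' ball z₀ t ∈ 𝓝 (0:ℂ) := by
    have h := rcs_image_nhds hmap (ball_mem_nhds z₀ ht0)
    rwa [hψ0] at h
  obtain ⟨s, hs0, hsT⟩ := Metric.mem_nhds_iff.1 hT
  refine ⟨s ^ n, pow_pos hs0 n, ?_⟩
  intro w' hdist hne
  set ζ := w' - w with hζdef
  have hζ0 : ζ ≠ 0 := sub_ne_zero.2 hne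
  have hζs : ‖ζ‖ < s ^ n := by rwa [dist_eq_norm] at hdist
  set η₁ := Complex.exp (Complex.log ζ / n) with hη₁def
  have hη₁pow : η₁ ^ n = ζ := by
    rw [hη₁def, ← Complex.exp_nat_mul, mul_div_cancel₀ _ hnC, Complex.exp_log hζ0]
  have hη₁0 : η₁ ≠ 0 := Complex.exp_ne_zero _
  set e := Complex.exp (2 * (Real.pi:ℂ) * Complex.I / n) with hedef
  have he_pow : e ^ n = 1 := by
    rw [hedef, ← Complex.exp_nat_mul, mul_div_cancel₀ _ hnC, Complex.exp_two_pi_mul_I]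
  have he1 : e ≠ 1 := by
    intro h
    rw [hedef, Complex.exp_eq_one_iff] at h
    obtain ⟨k, hk⟩ := h
    have h2πI : (2 * (Real.pi:ℂ) * Complex.I) ≠ 0 := by
      apply mul_ne_zero (mul_ne_zero two_ne_zero _) Complex.I_ne_zero
      exact_mod_cast Real.pi_ne_zero
    have hk2 : 2 * (Real.pi:ℂ) * Complex.I = (k:ℂ) * (2 * (Real.pi:ℂ) * Complex.I) * n := by
      rw [div_eq_iff hnC] at hk
      exact hk
    have hk3 : (1:ℂ) * (2 * (Real.pi:ℂ) * Complex.I) = ((k * n : ℤ):ℂ) * (2 * (Real.pi:ℂ) * Complex.I) := by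
      push_cast
      linear_combination hk2
    have hk4 : ((1:ℤ):ℂ) = ((k * n : ℤ):ℂ) := by
      have := mul_right_cancel₀ h2πI hk3
      exact_mod_cast this
    have hk5 : (1:ℤ) = k * n := Int.cast_injective hk4
    have : (n:ℤ) ∣ 1 := ⟨k, by linarith⟩
    have := Int.le_of_dvd one_pos this
    omega
  set η₂ := η₁ * e with hη₂def
  have hη₂pow : η₂ ^ n = ζ := by rw [hη₂def, mul_pow, he_pow, mul_one, hη₁pow]
  have hηne : η₂ ≠ η₁ := by
    intro h
    apply he1
    have : η₁ * e = η₁ * 1 := by rw [mul_one]; exact h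
    exact mul_left_cancel₀ hη₁0 this
  have hnorm₁ : ‖η₁‖ < s := by
    have hp : ‖η₁‖ ^ n = ‖ζ‖ := by rw [← norm_pow, hη₁pow]
    have : ‖η₁‖ ^ n < s ^ n := by rw [hp]; exact hζs
    exact lt_of_pow_lt_pow_left₀ n hs0.le this
  have hnorme : ‖e‖ = 1 := by
    have heq : 2 * (Real.pi:ℂ) * Complex.I / n = ((2 * Real.pi / n : ℝ):ℂ) * Complex.I := by
      push_cast
      ring
    rw [hedef, heq, Complex.norm_exp_ofReal_mul_I]
  have hnorm₂ : ‖η₂‖ < s := by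
    rw [hη₂def, norm_mul, hnorme, mul_one]
    exact hnorm₁
  obtain ⟨a, haB, hψa⟩ := hsT (mem_ball_zero_iff.2 hnorm₁)
  obtain ⟨b, hbB, hψb⟩ := hsT (mem_ball_zero_iff.2 hnorm₂)
  have hab : a ≠ b := by
    intro h
    rw [h, hψb] at hψa
    exact hηne hψa
  have hEa : E0 a = w' := by
    have := (ht a haB).2
    rw [hψa, hη₁pow, hζdef] at this
    linear_combination this
  have hEb : E0 b = w' := by
    have := (ht b hbB).2
    rw [hψb, hη₂pow, hζdef] at this
    linear_combination this
  exact ⟨a, b, (ht a haB).1, (ht b hbB).1, hab, hEa, hEb⟩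

/-- **Key lemma (Rouché-type).** Unique preimage in the ball. -/
lemma rcs_key {U₀ : Set ℂ} (hU₀ : IsOpen U₀) {Eat : ℂ} {ρ α₀ : ℝ}
    (hρ₀ : 0 < ρ) (hα0 : 0 ≤ α₀) (hα₀ρ : α₀ < ρ / 2) (hball : closedBall Eat ρ ⊆ U₀)
    {E0 : ℂ → ℂ} (hE0 : AnalyticOnNhd ℂ E0 U₀)
    (hbound : ∀ z ∈ U₀, ‖E0 z - (Eat - z)‖ ≤ α₀) :
    ∀ w₀ : ℂ, α₀ + ‖w₀‖ < ρ → ∃! z, z ∈ ball Eat ρ ∧ E0 z = w₀ := by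
  intro w₀ hw₀
  have h2α : 2 * α₀ < ρ := by linarith
  have hsub : ball Eat ρ ⊆ U₀ := ball_subset_closedBall.trans hball
  set r := ‖w₀‖ with hrdef
  have hr0 : 0 ≤ r := norm_nonneg _
  have hrρ : α₀ + r < ρ := hw₀
  set Q : ℂ → Prop := fun w => ∃ z, (z ∈ ball Eat ρ ∧ E0 z = w) ∧ deriv E0 z ≠ 0 ∧
    ∀ z', z' ∈ ball Eat ρ → E0 z' = w → z' = z with hQdef
  -- localization of solutions
  have hloc : ∀ w : ℂ, ‖w‖ ≤ r → ∀ z ∈ ball Eat ρ, E0 z = w → z ∈ closedBall Eat (α₀ + r) := by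
    intro w hw z hz hze
    have hb := hbound z (hsub hz)
    rw [hze] at hb
    have htri : ‖Eat - z‖ ≤ ‖w - (Eat - z)‖ + ‖w‖ := by
      calc ‖Eat - z‖ = ‖w - (w - (Eat - z))‖ := by ring_nf
      _ ≤ ‖w‖ + ‖w - (Eat - z)‖ := norm_sub_le _ _
      _ = ‖w - (Eat - z)‖ + ‖w‖ := by ring
    rw [mem_closedBall, dist_comm, dist_eq_norm]
    linarith
  have hKball : closedBall Eat (α₀ + r) ⊆ ball Eat ρ :=
    closedBall_subset_ball (by linarith)
  -- confinement lemma
  have hconf : ∀ V : Set ℂ, IsOpen V → ∀ w : ℂ,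
      (∀ z ∈ closedBall Eat (α₀ + r) \ V, E0 z ≠ w) →
      ∃ δ > 0, ∀ w', dist w' w < δ → ∀ z ∈ closedBall Eat (α₀ + r) \ V, E0 z ≠ w' := by
    intro V hV w hw
    set K := closedBall Eat (α₀ + r) \ V with hKdef
    have hK : IsCompact K := (isCompact_closedBall Eat (α₀ + r)).diff hV
    have hKU : K ⊆ U₀ := (Set.diff_subset.trans (hKball.trans hsub))
    have himg : IsCompact (E0 '' K) := hK.image_of_continuousOn (hE0.continuousOn.mono hKU)
    have hwni : w ∉ E0 '' K := by
      rintro ⟨z, hzK, hze⟩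
      exact hw z hzK hze
    have hopen : IsOpen (E0 '' K)ᶜ := himg.isClosed.isOpen_compl
    obtain ⟨δ, hδ0, hδ⟩ := Metric.isOpen_iff.1 hopen w hwni
    refine ⟨δ, hδ0, fun w' hw' z hzK hze => ?_⟩
    have : w' ∈ (E0 '' K)ᶜ := hδ (mem_ball.2 hw')
    exact this ⟨z, hzK, hze⟩
  -- open mapping on the ball
  have hopenmap : ∀ z ∈ ball Eat ρ, ∀ N ∈ 𝓝 z, E0 '' N ∈ 𝓝 (E0 z) := by
    intro z hz N hN
    have hmap := ((hE0 z (hsub hz)).eventually_constant_or_nhds_le_map_nhds_aux).resolve_left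
      (rcs_not_loc_const hρ₀ hα0 h2α hball hE0 hbound hz)
    exact rcs_image_nhds hmap hN
  -- good points propagate
  have good_open : ∀ w : ℂ, ‖w‖ ≤ r → Q w →
      ∃ δ > 0, ∀ w', dist w' w < δ → ‖w'‖ ≤ r → Q w' := by
    intro w hwr ⟨z₀, ⟨hz₀b, hz₀e⟩, hd0, huniq⟩
    obtain ⟨t, ht0, htU, hinj⟩ := rcs_loc_inj hU₀ hE0 (hsub hz₀b) hd0
    have hev : ∀ᶠ z in 𝓝 z₀, z ∈ ball Eat ρ ∧ deriv E0 z ≠ 0 :=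
      (isOpen_ball.eventually_mem hz₀b).and
        (((hE0.deriv) z₀ (hsub hz₀b)).continuousAt.eventually_ne hd0)
    obtain ⟨t₁, ht₁0, ht₁⟩ := Metric.eventually_nhds_iff_ball.1 hev
    set t' := min t t₁ with ht'def
    have ht'0 : 0 < t' := lt_min ht0 ht₁0
    set W := ball z₀ t' with hWdef
    have hWt : W ⊆ ball z₀ t := ball_subset_ball (min_le_left _ _)
    have hWt₁ : W ⊆ ball z₀ t₁ := ball_subset_ball (min_le_right _ _)
    have himg : E0 '' W ∈ 𝓝 w := by
      have := hopenmap z₀ hz₀b W (ball_mem_nhds z₀ ht'0)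
      rwa [hz₀e] at this
    obtain ⟨δ₁, hδ₁0, hδ₁⟩ := Metric.mem_nhds_iff.1 himg
    have hKV : ∀ z ∈ closedBall Eat (α₀ + r) \ W, E0 z ≠ w := by
      rintro z ⟨hz1, hz2⟩ hze
      exact hz2 (huniq z (hKball hz1) hze ▸ mem_ball_self ht'0)
    obtain ⟨δ₂, hδ₂0, hδ₂⟩ := hconf W isOpen_ball w hKV
    refine ⟨min δ₁ δ₂, lt_min hδ₁0 hδ₂0, fun w' hw' hw'r => ?_⟩
    obtain ⟨z₁, hz₁W, hz₁e⟩ := hδ₁ (mem_ball.2 (lt_of_lt_of_le hw' (min_le_left _ _)))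
    have hz₁props := ht₁ z₁ (hWt₁ hz₁W)
    refine ⟨z₁, ⟨hz₁props.1, hz₁e⟩, hz₁props.2, ?_⟩
    intro z' hz'b hz'e
    have hz'K : z' ∈ closedBall Eat (α₀ + r) := hloc w' hw'r z' hz'b hz'e
    have hz'W : z' ∈ W := by
      by_contra h
      exact hδ₂ w' (lt_of_lt_of_le hw' (min_le_right _ _)) z' ⟨hz'K, h⟩ hz'e
    exact hinj (hWt hz'W) (hWt hz₁W) (hz'e.trans hz₁e.symm)
  -- bad points propagate
  have bad_open : ∀ w : ℂ, ‖w‖ ≤ r → ¬ Q w →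
      ∃ δ > 0, ∀ w', dist w' w < δ → ‖w'‖ ≤ r → ¬ Q w' := by
    intro w hwr hnQ
    by_cases hex : ∃ z, z ∈ ball Eat ρ ∧ E0 z = w
    · obtain ⟨z₀, hz₀b, hz₀e⟩ := hex
      by_cases htwo : ∃ z', (z' ∈ ball Eat ρ ∧ E0 z' = w) ∧ z' ≠ z₀
      · -- two distinct solutions
        obtain ⟨z₁, ⟨hz₁b, hz₁e⟩, hne⟩ := htwo
        set t := dist z₁ z₀ / 2 with htdef
        have ht0 : 0 < t := by
          have := dist_pos.2 hne
          rw [htdef]; linarith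
        have hN₀ : E0 '' (ball z₀ t ∩ ball Eat ρ) ∈ 𝓝 w := by
          have := hopenmap z₀ hz₀b (ball z₀ t ∩ ball Eat ρ)
            (Filter.inter_mem (ball_mem_nhds z₀ ht0) (isOpen_ball.mem_nhds hz₀b))
          rwa [hz₀e] at this
        have hN₁ : E0 '' (ball z₁ t ∩ ball Eat ρ) ∈ 𝓝 w := by
          have := hopenmap z₁ hz₁b (ball z₁ t ∩ ball Eat ρ)
            (Filter.inter_mem (ball_mem_nhds z₁ ht0) (isOpen_ball.mem_nhds hz₁b))
          rwa [hz₁e] at this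
        obtain ⟨δ, hδ0, hδ⟩ := Metric.mem_nhds_iff.1 (Filter.inter_mem hN₀ hN₁)
        refine ⟨δ, hδ0, fun w' hw' _ => ?_⟩
        obtain ⟨ha, hb⟩ := hδ (mem_ball.2 hw')
        obtain ⟨a, ⟨haz, hab⟩, hae⟩ := ha
        obtain ⟨b, ⟨hbz, hbb⟩, hbe⟩ := hb
        have haneb : a ≠ b := by
          intro h
          rw [h] at haz
          have h1 : dist b z₀ < t := mem_ball.1 haz
          have h2 : dist b z₁ < t := mem_ball.1 hbz
          have := dist_triangle z₁ b z₀
          rw [dist_comm z₁ b] at this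
          rw [htdef] at h1 h2
          linarith
        rintro ⟨z, ⟨hzb, hze⟩, hzd, hzu⟩
        exact haneb ((hzu a hab hae).trans (hzu b hbb hbe).symm)
      · -- unique solution, must be a branch point
        push_neg at htwo
        have huniq : ∀ z', z' ∈ ball Eat ρ → E0 z' = w → z' = z₀ :=
          fun z' h1 h2 => htwo z' ⟨h1, h2⟩
        have hd0 : deriv E0 z₀ = 0 := by
          by_contra hd
          exact hnQ ⟨z₀, ⟨hz₀b, hz₀e⟩, hd, huniq⟩
        have hnc : ¬ ∀ᶠ z' in 𝓝 z₀, E0 z' = E0 z₀ :=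
          rcs_not_loc_const hρ₀ hα0 h2α hball hE0 hbound hz₀b
        obtain ⟨δ, hδ0, hδ⟩ := rcs_branch hE0 isOpen_ball hz₀b hsub w hz₀e hd0 hnc
        refine ⟨δ, hδ0, fun w' hw' _ => ?_⟩
        by_cases hww : w' = w
        · rwa [hww]
        · obtain ⟨a, b, haB, hbB, hab, hae, hbe⟩ := hδ w' hw' hww
          rintro ⟨z, ⟨hzb, hze⟩, hzd, hzu⟩
          exact hab ((hzu a haB hae).trans (hzu b hbB hbe).symm)
    · -- no solution
      have hKV : ∀ z ∈ closedBall Eat (α₀ + r) \ (∅ : Set ℂ), E0 z ≠ w := by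
        rintro z ⟨hz1, _⟩ hze
        exact hex ⟨z, hKball hz1, hze⟩
      obtain ⟨δ, hδ0, hδ⟩ := hconf ∅ isOpen_empty w hKV
      refine ⟨δ, hδ0, fun w' hw' hw'r => ?_⟩
      rintro ⟨z, ⟨hzb, hze⟩, _, _⟩
      exact hδ w' hw' z ⟨hloc w' hw'r z hzb hze, notMem_empty z⟩ hze
  -- connectedness argument
  have hQ0 : Q 0 := rcs_Q_zero hU₀ hρ₀ hα0 hα₀ρ hball hE0 hbound
  have hQw₀ : Q w₀ := by
    by_contra hn
    set S := closedBall (0:ℂ) r with hSdef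
    have hSpre : IsPreconnected S := (convex_closedBall (0:ℂ) r).isPreconnected
    set G : Set ℂ := ⋃₀ {x : Set ℂ | IsOpen x ∧ ∀ w' ∈ x, ‖w'‖ ≤ r → Q w'} with hGdef
    set Bd : Set ℂ := ⋃₀ {x : Set ℂ | IsOpen x ∧ ∀ w' ∈ x, ‖w'‖ ≤ r → ¬ Q w'} with hBdef
    have hGopen : IsOpen G := isOpen_sUnion fun _ h => h.1
    have hBopen : IsOpen Bd := isOpen_sUnion fun _ h => h.1
    have hcover : S ⊆ G ∪ Bd := by
      intro w hw
      have hwr : ‖w‖ ≤ r := mem_closedBall_zero_iff.1 hw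
      by_cases hQw : Q w
      · obtain ⟨δ, hδ0, hδ⟩ := good_open w hwr hQw
        exact Or.inl ⟨ball w δ, ⟨isOpen_ball, fun w' hw' h' => hδ w' (mem_ball.1 hw') h'⟩,
          mem_ball_self hδ0⟩
      · obtain ⟨δ, hδ0, hδ⟩ := bad_open w hwr hQw
        exact Or.inr ⟨ball w δ, ⟨isOpen_ball, fun w' hw' h' => hδ w' (mem_ball.1 hw') h'⟩,
          mem_ball_self hδ0⟩
    have hG : (S ∩ G).Nonempty := by
      obtain ⟨δ, hδ0, hδ⟩ := good_open 0 (by simpa using hr0) hQ0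
      exact ⟨0, mem_closedBall_zero_iff.2 (by simpa using hr0),
        ⟨ball 0 δ, ⟨isOpen_ball, fun w' hw' h' => hδ w' (mem_ball.1 hw') h'⟩, mem_ball_self hδ0⟩⟩
    have hB : (S ∩ Bd).Nonempty := by
      obtain ⟨δ, hδ0, hδ⟩ := bad_open w₀ le_rfl hn
      exact ⟨w₀, mem_closedBall_zero_iff.2 le_rfl,
        ⟨ball w₀ δ, ⟨isOpen_ball, fun w' hw' h' => hδ w' (mem_ball.1 hw') h'⟩, mem_ball_self hδ0⟩⟩
    obtain ⟨y, hyS, hyG, hyB⟩ := hSpre G Bd hGopen hBopen hcover hG hB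
    have hyr : ‖y‖ ≤ r := mem_closedBall_zero_iff.1 hyS
    obtain ⟨x1, hx1, hyx1⟩ := hyG
    obtain ⟨x2, hx2, hyx2⟩ := hyB
    exact hx2.2 y hyx2 hyr (hx1.2 y hyx1 hyr)
  obtain ⟨z, ⟨hzb, hze⟩, _, hzu⟩ := hQw₀
  exact ⟨z, ⟨hzb, hze⟩, fun z' ⟨h1, h2⟩ => hzu z' h1 h2⟩


/-- **First step of the conformality argument (Rouché).**
Fix `ρ ∈ (0, 4/5)`, `0 ≤ α₀ < ρ/2`, an open `U₀ ⊆ ℂ` containing the closed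
ball `B̄(E_at, ρ)`, and `E⁽⁰⁾ : U₀ → ℂ` analytic with
`|E⁽⁰⁾(z) − (E_at − z)| ≤ α₀` on `U₀`.  Then for every `ε > 0` with
`α₀ + ρ/2 + ε < ρ` and every `w` with `|w| < ρ/2 + ε`, the function
`z ↦ E⁽⁰⁾(z) − w` has exactly one zero in `B(E_at, ρ)`; consequently
`U₁ = {z ∈ U₀ : |E⁽⁰⁾(z)| ≤ ρ/2} ⊂ B(E_at, ρ)` and `E⁽⁰⁾` restricts to a
conformal bijection from `U₁` onto the closed disc `D_{ρ/2}`. -/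
theorem rouche_conformal_step
    (ρ : ℝ) (hρ₀ : 0 < ρ) (hρ₁ : ρ < 4 / 5)
    (α₀ : ℝ) (hα₀ : 0 ≤ α₀) (hα₀ρ : α₀ < ρ / 2)
    (U₀ : Set ℂ) (hU₀ : IsOpen U₀)
    (Eat : ℂ) (hball : closedBall Eat ρ ⊆ U₀)
    (E0 : ℂ → ℂ) (hE0 : AnalyticOnNhd ℂ E0 U₀)
    (hbound : ∀ z ∈ U₀, ‖E0 z - (Eat - z)‖ ≤ α₀) :
    (∀ ε > (0 : ℝ), α₀ + ρ / 2 + ε < ρ →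
      ∀ w : ℂ, ‖w‖ < ρ / 2 + ε →
        ∃! z : ℂ, z ∈ ball Eat ρ ∧ E0 z = w) ∧
    {z ∈ U₀ | ‖E0 z‖ ≤ ρ / 2} ⊆ ball Eat ρ ∧
    Set.BijOn E0 {z ∈ U₀ | ‖E0 z‖ ≤ ρ / 2} (closedBall 0 (ρ / 2)) ∧
    ∃ U V : Set ℂ, IsOpen U ∧ IsOpen V ∧
      {z ∈ U₀ | ‖E0 z‖ ≤ ρ / 2} ⊆ U ∧ U ⊆ U₀ ∧
      closedBall 0 (ρ / 2) ⊆ V ∧ Set.BijOn E0 U V := by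
  have hkey := rcs_key hU₀ hρ₀ hα₀ hα₀ρ hball hE0 hbound
  have hsub : ball Eat ρ ⊆ U₀ := ball_subset_closedBall.trans hball
  -- the inclusion U₁ ⊆ ball Eat ρ (used twice)
  have hU₁ball : {z ∈ U₀ | ‖E0 z‖ ≤ ρ / 2} ⊆ ball Eat ρ := by
    rintro z ⟨hzU, hzn⟩
    have hb := hbound z hzU
    have htri : ‖Eat - z‖ ≤ ‖E0 z - (Eat - z)‖ + ‖E0 z‖ := by
      calc ‖Eat - z‖ = ‖E0 z - (E0 z - (Eat - z))‖ := by ring_nf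
      _ ≤ ‖E0 z‖ + ‖E0 z - (Eat - z)‖ := norm_sub_le _ _
      _ = ‖E0 z - (Eat - z)‖ + ‖E0 z‖ := by ring
    rw [mem_ball, dist_comm, dist_eq_norm]
    linarith
  set ε0 : ℝ := (ρ / 2 - α₀) / 2 with hε0def
  have hε00 : 0 < ε0 := by rw [hε0def]; linarith
  have hε0cond : α₀ + ρ / 2 + ε0 < ρ := by rw [hε0def]; linarith
  have hkey' : ∀ w : ℂ, ‖w‖ < ρ / 2 + ε0 → ∃! z, z ∈ ball Eat ρ ∧ E0 z = w := by
    intro w hw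
    exact hkey w (by linarith)
  refine ⟨?_, hU₁ball, ?_, ?_⟩
  · intro ε hε hcond w hw
    exact hkey w (by linarith)
  · -- BijOn on U₁
    refine ⟨?_, ?_, ?_⟩
    · rintro z ⟨hzU, hzn⟩
      exact mem_closedBall_zero_iff.2 hzn
    · rintro z1 h1 z2 h2 he
      obtain ⟨z, hz, hzu⟩ := hkey' (E0 z1)
        (lt_of_le_of_lt h1.2 (by linarith))
      have e1 := hzu z1 ⟨hU₁ball h1, rfl⟩
      have e2 := hzu z2 ⟨hU₁ball h2, he.symm⟩
      rw [e1, e2]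
    · intro w hw
      have hwn : ‖w‖ ≤ ρ / 2 := mem_closedBall_zero_iff.1 hw
      obtain ⟨z, ⟨hzb, hze⟩, _⟩ := hkey' w (by linarith)
      exact ⟨z, ⟨hsub hzb, by rw [hze]; exact hwn⟩, hze⟩
  · -- the open sets U and V
    refine ⟨ball Eat ρ ∩ {z ∈ U₀ | ‖E0 z‖ < ρ / 2 + ε0}, ball 0 (ρ / 2 + ε0),
      ?_, isOpen_ball, ?_, ?_, ?_, ?_, ?_, ?_⟩
    · apply isOpen_ball.inter
      have : {z ∈ U₀ | ‖E0 z‖ < ρ / 2 + ε0} = U₀ ∩ E0 ⁻¹' (ball 0 (ρ / 2 + ε0)) := by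
        ext z
        simp [mem_ball_zero_iff]
      rw [this]
      exact (hE0.continuousOn).isOpen_inter_preimage hU₀ isOpen_ball
    · rintro z ⟨hzU, hzn⟩
      exact ⟨hU₁ball ⟨hzU, hzn⟩, hzU, by linarith⟩
    · exact fun z hz => hz.2.1
    · exact closedBall_subset_ball (by linarith)
    · rintro z ⟨hzb, hzU, hzn⟩
      exact mem_ball_zero_iff.2 hzn
    · rintro z1 h1 z2 h2 he
      obtain ⟨z, hz, hzu⟩ := hkey' (E0 z1) h1.2.2
      have e1 := hzu z1 ⟨h1.1, rfl⟩
      have e2 := hzu z2 ⟨h2.1, he.symm⟩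
      rw [e1, e2]
    · intro w hw
      have hwn : ‖w‖ < ρ / 2 + ε0 := mem_ball_zero_iff.1 hw
      obtain ⟨z, ⟨hzb, hze⟩, _⟩ := hkey' w hwn
      exact ⟨z, ⟨hzb, hsub hzb, by rw [hze]; exact hwn⟩, hze⟩
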